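/- Let (A, g_A) be an interior algebra which is a *-algebra (the Boolean subalgebra of A generated by the open elements of A is all of A), and let (B, g_B) be an interior algebra. Let h₀ be a function from the open elements of A to B such that h₀ ⊥ = ⊥, h₀ ⊤ = ⊤, h₀ a is open in B for every open a, h₀ (a ⊓ b) = h₀ a ⊓ h₀ b, h₀ (a ⊔ b) = h₀ a ⊔ h₀ b, and h₀ (g_A (aᶜ ⊔ b)) = g_B ((h₀ a)ᶜ ⊔ h₀ b) for all open a, b of A (i.e., h₀ is a Heyting algebra homomorphism between the Heyting algebras of open elements). Then there exists a unique homomorphism of interior algebras h : A → B with h a = h₀ a for every open element a of A. (Blok's Theorem I.2.15, specialized to *-algebras.) -/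

import Mathlib

/-- `g` is an interior operator on the Boolean algebra `B`. -/
def IsInteriorOp {B : Type*} [BooleanAlgebra B] (g : B → B) : Prop :=
  (∀ x, g x ≤ x) ∧ (∀ x, g (g x) = g x) ∧ (∀ x y, g (x ⊓ y) = g x ⊓ g y) ∧ g ⊤ = ⊤

/-- Membership in the Boolean subalgebra generated by `S`. -/
inductive BoolGen {B : Type*} [BooleanAlgebra B] (S : Set B) : B → Prop
  | base : ∀ x, x ∈ S → BoolGen S x
  | bot : BoolGen S ⊥
  | top : BoolGen S ⊤
  | inf : ∀ x y, BoolGen S x → BoolGen S y → BoolGen S (x ⊓ y)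
  | sup : ∀ x y, BoolGen S x → BoolGen S y → BoolGen S (x ⊔ y)
  | compl : ∀ x, BoolGen S x → BoolGen S xᶜ

/-- `h` is a homomorphism of interior algebras from `(A, gA)` to `(B, gB)`. -/
def IsIAHom {A B : Type*} [BooleanAlgebra A] [BooleanAlgebra B]
    (gA : A → A) (gB : B → B) (h : A → B) : Prop :=
  (∀ x y, h (x ⊓ y) = h x ⊓ h y) ∧ (∀ x y, h (x ⊔ y) = h x ⊔ h y) ∧
  (∀ x, h xᶜ = (h x)ᶜ) ∧ h ⊥ = ⊥ ∧ h ⊤ = ⊤ ∧ (∀ x, h (gA x) = gB (h x))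



set_option linter.unusedSectionVars false
set_option linter.unusedVariables false

namespace BlokAux

variable {A C : Type*} [BooleanAlgebra A] [BooleanAlgebra C]

/-- Join of terms `f a ⊓ (f b)ᶜ` over a list of pairs. -/
def evalL (f : A → C) : List (A × A) → C
  | [] => ⊥
  | p :: L => (f p.1 ⊓ (f p.2)ᶜ) ⊔ evalL f L

/-- Meet of terms `t p` over a list of pairs. -/
def meetL (t : A × A → C) : List (A × A) → C
  | [] => ⊤
  | p :: L => t p ⊓ meetL t L

def OkL (P : A → Prop) (L : List (A × A)) : Prop := ∀ p ∈ L, P p.1 ∧ P p.2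

structure GoodF (P : A → Prop) (f : A → C) : Prop where
  finf : ∀ a b, P a → P b → f (a ⊓ b) = f a ⊓ f b
  fsup : ∀ a b, P a → P b → f (a ⊔ b) = f a ⊔ f b
  fbot : f ⊥ = ⊥
  ftop : f ⊤ = ⊤

structure GoodP (P : A → Prop) : Prop where
  pinf : ∀ a b, P a → P b → P (a ⊓ b)
  psup : ∀ a b, P a → P b → P (a ⊔ b)
  pbot : P ⊥
  ptop : P ⊤

lemma goodF_id (P : A → Prop) : GoodF P (id : A → A) :=
  ⟨fun _ _ _ _ => rfl, fun _ _ _ _ => rfl, rfl, rfl⟩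

lemma evalL_append (f : A → C) (L M : List (A × A)) :
    evalL f (L ++ M) = evalL f L ⊔ evalL f M := by
  induction L with
  | nil => simp [evalL]
  | cons p L ih => simp [evalL, ih, sup_assoc]

def prodL : List (A × A) → List (A × A) → List (A × A)
  | [], _ => []
  | p :: L, M => (M.map fun q => (p.1 ⊓ q.1, p.2 ⊔ q.2)) ++ prodL L M

def complL : List (A × A) → List (A × A)
  | [] => [(⊤, ⊥)]
  | p :: L => prodL [(⊤, p.1), (p.2, ⊥)] (complL L)

lemma okL_nil {P : A → Prop} : OkL P ([] : List (A × A)) := fun p hp => by cases hp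

lemma okL_cons {P : A → Prop} {p : A × A} {L : List (A × A)} (h : OkL P (p :: L)) :
    (P p.1 ∧ P p.2) ∧ OkL P L :=
  ⟨h p (List.mem_cons_self), fun q hq => h q (List.mem_cons_of_mem _ hq)⟩

lemma okL_append {P : A → Prop} {L M : List (A × A)} (hL : OkL P L) (hM : OkL P M) :
    OkL P (L ++ M) := by
  intro p hp
  rcases List.mem_append.mp hp with h | h
  · exact hL p h
  · exact hM p h

lemma okL_map_term {P : A → Prop} (hP : GoodP P) {M : List (A × A)} {a b : A}
    (hM : OkL P M) (ha : P a) (hb : P b) :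
    OkL P (M.map fun q => (a ⊓ q.1, b ⊔ q.2)) := by
  intro p hp
  rcases List.mem_map.mp hp with ⟨q, hq, rfl⟩
  exact ⟨hP.pinf _ _ ha (hM q hq).1, hP.psup _ _ hb (hM q hq).2⟩

lemma okL_prodL {P : A → Prop} (hP : GoodP P) {L M : List (A × A)}
    (hL : OkL P L) (hM : OkL P M) : OkL P (prodL L M) := by
  induction L with
  | nil => exact okL_nil
  | cons p L ih =>
    obtain ⟨⟨h1, h2⟩, hL'⟩ := okL_cons hL
    exact okL_append (okL_map_term hP hM h1 h2) (ih hL')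

lemma okL_complL {P : A → Prop} (hP : GoodP P) {L : List (A × A)} (hL : OkL P L) :
    OkL P (complL L) := by
  induction L with
  | nil =>
    intro p hp
    simp only [complL, List.mem_singleton] at hp
    subst hp
    exact ⟨hP.ptop, hP.pbot⟩
  | cons p L ih =>
    obtain ⟨⟨h1, h2⟩, hL'⟩ := okL_cons hL
    refine okL_prodL hP ?_ (ih hL')
    intro q hq
    rcases List.mem_cons.mp hq with rfl | hq
    · exact ⟨hP.ptop, h1⟩
    · simp only [List.mem_singleton] at hq
      subst hq
      exact ⟨h2, hP.pbot⟩

lemma evalL_map_term {P : A → Prop} {f : A → C} (hf : GoodF P f)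
    {M : List (A × A)} {a b : A} (hM : OkL P M) (ha : P a) (hb : P b) :
    evalL f (M.map fun q => (a ⊓ q.1, b ⊔ q.2)) = (f a ⊓ (f b)ᶜ) ⊓ evalL f M := by
  induction M with
  | nil => simp [evalL]
  | cons q M ih =>
    obtain ⟨⟨h1, h2⟩, hM'⟩ := okL_cons hM
    simp only [List.map_cons, evalL]
    rw [ih hM', hf.finf a q.1 ha h1, hf.fsup b q.2 hb h2, compl_sup, inf_sup_left]
    congr 1
    ac_rfl

lemma evalL_prodL {P : A → Prop} {f : A → C} (hP : GoodP P) (hf : GoodF P f)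
    {L M : List (A × A)} (hL : OkL P L) (hM : OkL P M) :
    evalL f (prodL L M) = evalL f L ⊓ evalL f M := by
  induction L with
  | nil => simp [prodL, evalL]
  | cons p L ih =>
    obtain ⟨⟨h1, h2⟩, hL'⟩ := okL_cons hL
    simp only [prodL, evalL_append, evalL]
    rw [evalL_map_term hf hM h1 h2, ih hL', inf_sup_right]

lemma evalL_complL {P : A → Prop} {f : A → C} (hP : GoodP P) (hf : GoodF P f)
    {L : List (A × A)} (hL : OkL P L) :
    evalL f (complL L) = (evalL f L)ᶜ := by
  induction L with
  | nil => simp [complL, evalL, hf.fbot, hf.ftop]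
  | cons p L ih =>
    obtain ⟨⟨h1, h2⟩, hL'⟩ := okL_cons hL
    have hok2 : OkL P [(⊤, p.1), (p.2, ⊥)] := by
      intro q hq
      rcases List.mem_cons.mp hq with rfl | hq
      · exact ⟨hP.ptop, h1⟩
      · simp only [List.mem_singleton] at hq
        subst hq
        exact ⟨h2, hP.pbot⟩
    simp only [complL]
    rw [evalL_prodL hP hf hok2 (okL_complL hP hL'), ih hL']
    simp only [evalL, hf.ftop, hf.fbot, compl_bot, compl_top, inf_top_eq, top_inf_eq,
      sup_bot_eq, bot_sup_eq, inf_bot_eq, compl_sup, compl_inf, compl_compl]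
    all_goals ac_rfl

lemma cut {x y z : C} (h : x ≤ y ⊔ z) (hd : x ⊓ y = ⊥) : x ≤ z :=
  calc x = x ⊓ (y ⊔ z) := (inf_eq_left.mpr h).symm
    _ = (x ⊓ y) ⊔ (x ⊓ z) := inf_sup_left x y z
    _ = x ⊓ z := by rw [hd, bot_sup_eq]
    _ ≤ z := inf_le_right

lemma key {P : A → Prop} {f : A → C} (hP : GoodP P) (hf : GoodF P f) :
    ∀ M : List (A × A), OkL P M → ∀ a b : A, P a → P b →
      a ⊓ bᶜ ≤ evalL id M → f a ⊓ (f b)ᶜ ≤ evalL f M := by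
  intro M
  induction M with
  | nil =>
    intro _ a b ha hb hle
    have hab : a ≤ b := by
      have : a ⊓ bᶜ = ⊥ := le_bot_iff.mp hle
      rwa [← sdiff_eq, sdiff_eq_bot_iff] at this
    have : f a ≤ f b := by
      have := hf.finf a b ha hb
      rw [inf_eq_left.mpr hab] at this
      exact this ▸ inf_le_right
    simpa [evalL, ← sdiff_eq, sdiff_eq_bot_iff, le_bot_iff] using this
  | cons q M ih =>
    intro hM a b ha hb hle
    obtain ⟨⟨hc, hd⟩, hM'⟩ := okL_cons hM
    simp only [evalL, id] at hle
    have e1 : (a ⊓ q.2) ⊓ bᶜ ≤ evalL id M := by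
      refine cut (le_trans ?_ hle) ?_
      · exact le_inf (le_trans inf_le_left inf_le_left) inf_le_right
      · have : a ⊓ q.2 ⊓ bᶜ ⊓ (q.1 ⊓ q.2ᶜ) = (a ⊓ bᶜ ⊓ q.1) ⊓ (q.2 ⊓ q.2ᶜ) := by ac_rfl
        rw [this, inf_compl_eq_bot, inf_bot_eq]
    have e2 : a ⊓ (b ⊔ q.1)ᶜ ≤ evalL id M := by
      refine cut (le_trans ?_ hle) ?_
      · rw [compl_sup]
        exact le_inf inf_le_left (le_trans inf_le_right inf_le_left)
      · rw [compl_sup]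
        have : a ⊓ (bᶜ ⊓ q.1ᶜ) ⊓ (q.1 ⊓ q.2ᶜ) = (a ⊓ bᶜ ⊓ q.2ᶜ) ⊓ (q.1ᶜ ⊓ q.1) := by ac_rfl
        rw [this, compl_inf_eq_bot, inf_bot_eq]
    have i1 := ih hM' (a ⊓ q.2) b (hP.pinf _ _ ha hd) hb e1
    have i2 := ih hM' a (b ⊔ q.1) ha (hP.psup _ _ hb hc) e2
    rw [hf.finf a q.2 ha hd] at i1
    rw [hf.fsup b q.1 hb hc] at i2
    simp only [evalL]
    rw [← sdiff_le_iff, sdiff_eq, compl_inf, compl_compl, inf_sup_left]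
    apply sup_le
    · refine le_trans (le_of_eq ?_) i2
      rw [compl_sup]
      ac_rfl
    · refine le_trans (le_of_eq ?_) i1
      ac_rfl

lemma key_le {P : A → Prop} {f : A → C} (hP : GoodP P) (hf : GoodF P f)
    {L M : List (A × A)} (hL : OkL P L) (hM : OkL P M)
    (h : evalL id L ≤ evalL id M) : evalL f L ≤ evalL f M := by
  induction L with
  | nil => simp [evalL]
  | cons p L ih =>
    obtain ⟨⟨h1, h2⟩, hL'⟩ := okL_cons hL
    simp only [evalL, id] at h ⊢
    exact sup_le
      (key hP hf M hM p.1 p.2 h1 h2 (le_trans le_sup_left h))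
      (ih hL' (le_trans le_sup_right h))

lemma meetL_compl (f : A → C) (L : List (A × A)) :
    meetL (fun p => (f p.1)ᶜ ⊔ f p.2) L = (evalL f L)ᶜ := by
  induction L with
  | nil => simp [meetL, evalL]
  | cons p L ih => simp [meetL, evalL, ih, compl_sup, compl_inf]

lemma map_meetL {D : Type*} [BooleanAlgebra D] (φ : C → D)
    (hφ : ∀ x y, φ (x ⊓ y) = φ x ⊓ φ y) (hφt : φ ⊤ = ⊤)
    (t : A × A → C) (L : List (A × A)) :
    φ (meetL t L) = meetL (fun p => φ (t p)) L := by
  induction L with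
  | nil => simp [meetL, hφt]
  | cons p L ih => simp [meetL, hφ, ih]

lemma meetL_congr {t t' : A × A → C} {L : List (A × A)}
    (h : ∀ p ∈ L, t p = t' p) : meetL t L = meetL t' L := by
  induction L with
  | nil => rfl
  | cons p L ih =>
    simp only [meetL]
    rw [h p (List.mem_cons_self), ih fun q hq => h q (List.mem_cons_of_mem _ hq)]

end BlokAux

open BlokAux

/-- Blok's Theorem I.2.15 for `*`-algebras: a Heyting homomorphism between the Heyting
algebras of open elements extends to a unique homomorphism of interior algebras. -/
theorem star_algebra_hom_extension {A B : Type*} [BooleanAlgebra A] [BooleanAlgebra B]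
    (gA : A → A) (gB : B → B) (hgA : IsInteriorOp gA) (hgB : IsInteriorOp gB)
    (hstar : ∀ x : A, BoolGen {y : A | gA y = y} x)
    (h₀ : A → B)
    (hbot : h₀ ⊥ = ⊥) (htop : h₀ ⊤ = ⊤)
    (hopen : ∀ a : A, gA a = a → gB (h₀ a) = h₀ a)
    (hinf : ∀ a b : A, gA a = a → gA b = b → h₀ (a ⊓ b) = h₀ a ⊓ h₀ b)
    (hsup : ∀ a b : A, gA a = a → gA b = b → h₀ (a ⊔ b) = h₀ a ⊔ h₀ b)
    (himp : ∀ a b : A, gA a = a → gA b = b →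
      h₀ (gA (aᶜ ⊔ b)) = gB ((h₀ a)ᶜ ⊔ h₀ b)) :
    ∃! h : A → B, IsIAHom gA gB h ∧ ∀ a : A, gA a = a → h a = h₀ a := by
  classical
  obtain ⟨g1, g2, g3, g4⟩ := hgA
  obtain ⟨G1, G2, G3, G4⟩ := hgB
  set P : A → Prop := fun y => gA y = y with hPdef
  have hgmono : ∀ x y : A, x ≤ y → gA x ≤ gA y := by
    intro x y hxy
    have h := g3 x y
    rw [inf_eq_left.mpr hxy] at h
    exact h ▸ inf_le_right
  have hP : GoodP P := by
    refine ⟨?_, ?_, ?_, g4⟩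
    · intro a b ha hb
      show gA (a ⊓ b) = a ⊓ b
      rw [g3, ha, hb]
    · intro a b ha hb
      refine le_antisymm (g1 _) (sup_le ?_ ?_)
      · calc a = gA a := ha.symm
          _ ≤ gA (a ⊔ b) := hgmono a (a ⊔ b) le_sup_left
      · calc b = gA b := hb.symm
          _ ≤ gA (a ⊔ b) := hgmono b (a ⊔ b) le_sup_right
    · exact le_antisymm (g1 ⊥) bot_le
  have hF0 : GoodF P h₀ := ⟨hinf, hsup, hbot, htop⟩
  have hFid : GoodF P (id : A → A) := goodF_id P
  -- existence of representations
  have rep : ∀ x : A, ∃ L : List (A × A), OkL P L ∧ evalL (id : A → A) L = x := by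
    intro x
    induction hstar x with
    | base a ha =>
      refine ⟨[(a, ⊥)], ?_, by simp [evalL]⟩
      intro p hp
      simp only [List.mem_singleton] at hp
      subst hp
      exact ⟨ha, hP.pbot⟩
    | bot => exact ⟨[], okL_nil, rfl⟩
    | top =>
      refine ⟨[(⊤, ⊥)], ?_, by simp [evalL]⟩
      intro p hp
      simp only [List.mem_singleton] at hp
      subst hp
      exact ⟨hP.ptop, hP.pbot⟩
    | inf x y hx hy ihx ihy =>
      obtain ⟨L, hL, hLe⟩ := ihx
      obtain ⟨M, hM, hMe⟩ := ihy
      exact ⟨prodL L M, okL_prodL hP hL hM, by rw [evalL_prodL hP hFid hL hM, hLe, hMe]⟩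
    | sup x y hx hy ihx ihy =>
      obtain ⟨L, hL, hLe⟩ := ihx
      obtain ⟨M, hM, hMe⟩ := ihy
      exact ⟨L ++ M, okL_append hL hM, by rw [evalL_append, hLe, hMe]⟩
    | compl x hx ihx =>
      obtain ⟨L, hL, hLe⟩ := ihx
      exact ⟨complL L, okL_complL hP hL, by rw [evalL_complL hP hFid hL, hLe]⟩
  choose Lx hLok hLev using rep
  set h : A → B := fun x => evalL h₀ (Lx x) with hhdef
  -- well-definedness
  have hwd : ∀ (x : A) (L : List (A × A)), OkL P L → evalL (id : A → A) L = x →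
      h x = evalL h₀ L := by
    intro x L hL hLe
    refine le_antisymm ?_ ?_
    · exact key_le hP hF0 (hLok x) hL (by rw [hLev x, hLe])
    · exact key_le hP hF0 hL (hLok x) (by rw [hLev x, hLe])
  -- agreement on opens
  have hagree : ∀ a : A, gA a = a → h a = h₀ a := by
    intro a ha
    have hok : OkL P [(a, ⊥)] := by
      intro p hp
      simp only [List.mem_singleton] at hp
      subst hp
      exact ⟨ha, hP.pbot⟩
    rw [hwd a [(a, ⊥)] hok (by simp [evalL])]
    simp [evalL, hbot]
  -- Boolean homomorphism properties
  have hHinf : ∀ x y : A, h (x ⊓ y) = h x ⊓ h y := by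
    intro x y
    rw [hwd (x ⊓ y) (prodL (Lx x) (Lx y)) (okL_prodL hP (hLok x) (hLok y))
      (by rw [evalL_prodL hP hFid (hLok x) (hLok y), hLev x, hLev y]),
      evalL_prodL hP hF0 (hLok x) (hLok y)]
  have hHsup : ∀ x y : A, h (x ⊔ y) = h x ⊔ h y := by
    intro x y
    rw [hwd (x ⊔ y) (Lx x ++ Lx y) (okL_append (hLok x) (hLok y))
      (by rw [evalL_append, hLev x, hLev y]), evalL_append]
  have hHcompl : ∀ x : A, h xᶜ = (h x)ᶜ := by
    intro x
    rw [hwd xᶜ (complL (Lx x)) (okL_complL hP (hLok x))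
      (by rw [evalL_complL hP hFid (hLok x), hLev x]), evalL_complL hP hF0 (hLok x)]
  have hHbot : h ⊥ = ⊥ := by
    rw [hwd ⊥ [] okL_nil rfl]; rfl
  have hHtop : h ⊤ = ⊤ := by
    rw [hagree ⊤ g4, htop]
  -- interior commutation
  have hHg : ∀ x : A, h (gA x) = gB (h x) := by
    intro x
    set L := Lx xᶜ with hLdef
    have hLok' : OkL P L := hLok xᶜ
    have hLev' : evalL (id : A → A) L = xᶜ := hLev xᶜ
    have hx : x = meetL (fun p => p.1ᶜ ⊔ p.2) L := by
      have := meetL_compl (id : A → A) L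
      simp only [id] at this
      rw [this, hLev', compl_compl]
    have hgx : gA x = meetL (fun p => gA (p.1ᶜ ⊔ p.2)) L := by
      rw [hx, map_meetL gA g3 g4]
    rw [hgx, map_meetL h hHinf hHtop]
    rw [meetL_congr (t' := fun p : A × A => gB ((h₀ p.1)ᶜ ⊔ h₀ p.2)) ?_]
    · rw [← map_meetL gB G3 G4, meetL_compl h₀]
      have : evalL h₀ L = h xᶜ := (hwd xᶜ L hLok' hLev').symm
      rw [this, hHcompl, compl_compl]
    · intro p hp
      obtain ⟨hp1, hp2⟩ := hLok' p hp
      have hopen' : gA (gA (p.1ᶜ ⊔ p.2)) = gA (p.1ᶜ ⊔ p.2) := g2 _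
      rw [hagree _ hopen', himp p.1 p.2 hp1 hp2]
  refine ⟨h, ⟨⟨hHinf, hHsup, hHcompl, hHbot, hHtop, hHg⟩, hagree⟩, ?_⟩
  -- uniqueness
  rintro h' ⟨⟨h'inf, h'sup, h'compl, h'bot, h'top, h'g⟩, h'agree⟩
  funext x
  induction hstar x with
  | base a ha =>
    rw [h'agree a ha, hagree a ha]
  | bot => rw [h'bot, hHbot]
  | top => rw [h'top, hHtop]
  | inf x y hx hy ihx ihy => rw [h'inf, hHinf, ihx, ihy]
  | sup x y hx hy ihx ihy => rw [h'sup, hHsup, ihx, ihy]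
  | compl x hx ihx => rw [h'compl, hHcompl, ihx]
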